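/- Fix j ∈ ℕ, Δ > ε > 0, β = 1 − ν²/σ̄² < 1. For t ∈ [jΔ + ε, (j+1)Δ), the process Z_t = Z_{jΔ} + (μ − σ̄²/2)(t − jΔ) + ((t − jΔ)/ε)^{β/2}[σ̄(W_{jΔ+ε} − W_{jΔ}) + ν∫_{jΔ+ε}^t ((u − jΔ)/ε)^{−β/2} dW_u] satisfies the SDE dZ_t = [(μ − σ̄²/2) + (β/(2(t − jΔ)))(Z_t − Z_{jΔ} − (μ − σ̄²/2)(t − jΔ))] dt + ν dW_t. -/

import Mathlib

open Real MeasureTheory intervalIntegral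

theorem sde_aux (c ε ν σ μ β b t : ℝ) (hε : 0 < ε)
    (w : ℝ → ℝ) (hw : Continuous w)
    (ht : c + ε ≤ t) (htb : t < b)
    (g : ℝ → ℝ) (hg : ∀ u, g u = ((u - c) / ε) ^ (-(β / 2)))
    (ι Zf : ℝ → ℝ)
    (hι : ∀ s ∈ Set.Ico (c + ε) b,
      ι s = g s * w s - g (c + ε) * w (c + ε) - ∫ u in (c + ε)..s, deriv g u * w u)
    (hZ : ∀ s ∈ Set.Ico (c + ε) b,
      Zf s = Zf c + (μ - σ ^ 2 / 2) * (s - c) + ((s - c) / ε) ^ (β / 2) *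
        (σ * (w (c + ε) - w c) + ν * ι s)) :
    Zf t = Zf (c + ε)
      + (∫ u in (c + ε)..t,
          ((μ - σ ^ 2 / 2) + (β / (2 * (u - c))) * (Zf u - Zf c - (μ - σ ^ 2 / 2) * (u - c))))
      + ν * (w t - w (c + ε)) := by
  set a := c + ε with ha
  have hεne : ε ≠ 0 := hε.ne'
  have hca : c < a := by rw [ha]; linarith
  have hinner : ∀ u : ℝ, HasDerivAt (fun v => (v - c) / ε) (1 / ε) u := by
    intro u
    simpa using ((hasDerivAt_id u).sub_const c).div_const ε
  have hfd : ∀ u, c < u → HasDerivAt (fun v => ((v - c) / ε) ^ (β / 2))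
      ((β / 2) * ((u - c) / ε) ^ (β / 2 - 1) * (1 / ε)) u := by
    intro u hu
    have hyne : (u - c) / ε ≠ 0 := (div_pos (by linarith) hε).ne'
    exact (Real.hasDerivAt_rpow_const (p := β / 2) (Or.inl hyne)).comp u (hinner u)
  have hgd : ∀ u, c < u → HasDerivAt g
      ((-(β / 2)) * ((u - c) / ε) ^ (-(β / 2) - 1) * (1 / ε)) u := by
    intro u hu
    have hyne : (u - c) / ε ≠ 0 := (div_pos (by linarith) hε).ne'
    have hgeq : g = fun v => ((v - c) / ε) ^ (-(β / 2)) := funext hg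
    rw [hgeq]
    exact (Real.hasDerivAt_rpow_const (p := -(β / 2)) (Or.inl hyne)).comp u (hinner u)
  have hderivg : ∀ u, c < u → deriv g u
      = (-(β / 2)) * ((u - c) / ε) ^ (-(β / 2) - 1) * (1 / ε) := fun u hu => (hgd u hu).deriv
  have hbase : Continuous fun v : ℝ => (v - c) / ε := (continuous_id.sub continuous_const).div_const ε
  have hq : ∀ q : ℝ, ContinuousOn (fun v => ((v - c) / ε) ^ q) (Set.Ioi c) := by
    intro q v hv
    have hvne : (v - c) / ε ≠ 0 := (div_pos (sub_pos.2 hv) hε).ne'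
    have h1 : ContinuousAt (fun x : ℝ => x ^ q) ((v - c) / ε) :=
      Real.continuousAt_rpow_const _ q (Or.inl hvne)
    have h2 := ContinuousAt.comp (x := v) (g := fun x : ℝ => x ^ q)
      (f := fun v => (v - c) / ε) h1 (hbase.continuousAt)
    exact h2.continuousWithinAt
  have hψcont : ContinuousOn (fun v => deriv g v * w v) (Set.Ioi c) := by
    have hexp : ContinuousOn
        (fun v => -(β / 2) * ((v - c) / ε) ^ (-(β / 2) - 1) * (1 / ε) * w v) (Set.Ioi c) :=
      ((continuousOn_const.mul (hq (-(β / 2) - 1))).mul continuousOn_const).mul hw.continuousOn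
    apply ContinuousOn.congr hexp
    intro v hv
    simp only []
    rw [hderivg v hv]
  have hψca : ∀ u, a ≤ u → ContinuousAt (fun v => deriv g v * w v) u := fun u hu =>
    hψcont.continuousAt (Ioi_mem_nhds (hca.trans_le hu))
  have hψm : ∀ u, a ≤ u → StronglyMeasurableAtFilter (fun v => deriv g v * w v) (nhds u) :=
    fun u hu => ⟨Set.Ioi c, Ioi_mem_nhds (hca.trans_le hu),
      hψcont.aestronglyMeasurable measurableSet_Ioi⟩
  have hψint : ∀ u, a ≤ u → IntervalIntegrable (fun v => deriv g v * w v) volume a u := by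
    intro u hu
    apply (hψcont.mono ?_).intervalIntegrable
    intro v hv
    exact hca.trans_le ((le_inf le_rfl hu).trans hv.1)
  have hh : ∀ u, a ≤ u → HasDerivAt (fun s => ∫ v in a..s, deriv g v * w v)
      (deriv g u * w u) u := fun u hu =>
    intervalIntegral.integral_hasDerivAt_right (hψint u hu) (hψm u hu) (hψca u hu)
  have huIcc : Set.uIcc a t = Set.Icc a t := Set.uIcc_of_le ht
  have hIcc_sub : Set.Icc a t ⊆ Set.Ioi c := fun v hv => hca.trans_le hv.1
  -- the pathwise solution map and its derivative
  have hGd : ∀ u ∈ Set.uIcc a t, HasDerivAt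
      (fun s => (μ - σ ^ 2 / 2) * (s - c) + ((s - c) / ε) ^ (β / 2) * (σ * (w a - w c))
        - ν * (((s - c) / ε) ^ (β / 2) * (w a + ∫ v in a..s, deriv g v * w v)))
      ((μ - σ ^ 2 / 2) + ((β / 2) * ((u - c) / ε) ^ (β / 2 - 1) * (1 / ε)) * (σ * (w a - w c))
        - ν * (((β / 2) * ((u - c) / ε) ^ (β / 2 - 1) * (1 / ε))
              * (w a + ∫ v in a..u, deriv g v * w v)
            + ((u - c) / ε) ^ (β / 2) * (deriv g u * w u))) u := by
    intro u hu
    rw [huIcc] at hu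
    have hau : a ≤ u := hu.1
    have hcu : c < u := hca.trans_le hau
    have h1 : HasDerivAt (fun s => (μ - σ ^ 2 / 2) * (s - c)) (μ - σ ^ 2 / 2) u := by
      simpa using ((hasDerivAt_id u).sub_const c).const_mul (μ - σ ^ 2 / 2)
    have h2 := (hfd u hcu).mul_const (σ * (w a - w c))
    have h3 := ((hfd u hcu).mul ((hasDerivAt_const u (w a)).add (hh u hau))).const_mul ν
    have h4 := (h1.add h2).sub h3
    exact h4.congr_deriv (by simp only [Pi.add_apply, zero_add])
  have hHcont : ContinuousOn (fun s => ∫ v in a..s, deriv g v * w v) (Set.Icc a t) :=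
    fun u hu => ((hh u hu.1).continuousAt).continuousWithinAt
  have hDcont : ContinuousOn (fun u =>
      (μ - σ ^ 2 / 2) + ((β / 2) * ((u - c) / ε) ^ (β / 2 - 1) * (1 / ε)) * (σ * (w a - w c))
        - ν * (((β / 2) * ((u - c) / ε) ^ (β / 2 - 1) * (1 / ε))
              * (w a + ∫ v in a..u, deriv g v * w v)
            + ((u - c) / ε) ^ (β / 2) * (deriv g u * w u))) (Set.Icc a t) := by
    have hf'c : ContinuousOn (fun u => (β / 2) * ((u - c) / ε) ^ (β / 2 - 1) * (1 / ε))
        (Set.Icc a t) :=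
      (continuousOn_const.mul ((hq (β / 2 - 1)).mono hIcc_sub)).mul continuousOn_const
    exact (continuousOn_const.add (hf'c.mul continuousOn_const)).sub
      (continuousOn_const.mul ((hf'c.mul (continuousOn_const.add hHcont)).add
        (((hq (β / 2)).mono hIcc_sub).mul (hψcont.mono hIcc_sub))))
  have hint : IntervalIntegrable (fun u =>
      (μ - σ ^ 2 / 2) + ((β / 2) * ((u - c) / ε) ^ (β / 2 - 1) * (1 / ε)) * (σ * (w a - w c))
        - ν * (((β / 2) * ((u - c) / ε) ^ (β / 2 - 1) * (1 / ε))
              * (w a + ∫ v in a..u, deriv g v * w v)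
            + ((u - c) / ε) ^ (β / 2) * (deriv g u * w u))) volume a t :=
    (huIcc ▸ hDcont).intervalIntegrable
  have hFTC := intervalIntegral.integral_eq_sub_of_hasDerivAt hGd hint
  have hcongr : (∫ u in a..t,
        ((μ - σ ^ 2 / 2) + (β / (2 * (u - c))) * (Zf u - Zf c - (μ - σ ^ 2 / 2) * (u - c))))
      = ∫ u in a..t,
        ((μ - σ ^ 2 / 2) + ((β / 2) * ((u - c) / ε) ^ (β / 2 - 1) * (1 / ε)) * (σ * (w a - w c))
        - ν * (((β / 2) * ((u - c) / ε) ^ (β / 2 - 1) * (1 / ε))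
              * (w a + ∫ v in a..u, deriv g v * w v)
            + ((u - c) / ε) ^ (β / 2) * (deriv g u * w u))) := by
    apply intervalIntegral.integral_congr
    intro u hu
    rw [huIcc] at hu
    have hau : a ≤ u := hu.1
    have hcu : c < u := hca.trans_le hau
    have hxne : u - c ≠ 0 := sub_ne_zero.2 hcu.ne'
    have hyu : (0:ℝ) < (u - c) / ε := div_pos (by linarith) hε
    have hub : u ∈ Set.Ico a b := ⟨hau, lt_of_le_of_lt hu.2 htb⟩
    have hga : g a = 1 := by
      rw [hg, ha, show c + ε - c = ε by ring, div_self hεne, Real.one_rpow]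
    simp only []
    rw [hZ u hub, hι u hub, hga, hg u, hderivg u hcu]
    have e1 : ((u - c) / ε) ^ (β / 2 - 1) = ((u - c) / ε) ^ (β / 2) * (ε / (u - c)) := by
      rw [show β / 2 - 1 = β / 2 + (-1) by ring, Real.rpow_add hyu, Real.rpow_neg_one, inv_div]
    have e2 : ((u - c) / ε) ^ (-(β / 2) - 1) = ((u - c) / ε) ^ (-(β / 2)) * (ε / (u - c)) := by
      rw [show -(β / 2) - 1 = -(β / 2) + (-1) by ring, Real.rpow_add hyu, Real.rpow_neg_one,
        inv_div]
    rw [e1, e2]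
    field_simp
    ring
  have hta : t ∈ Set.Ico a b := ⟨ht, htb⟩
  have haa : a ∈ Set.Ico a b := ⟨le_rfl, lt_of_le_of_lt ht htb⟩
  have hga : g a = 1 := by
    rw [hg, ha, show c + ε - c = ε by ring, div_self hεne, Real.one_rpow]
  have hι0 : ι a = 0 := by
    rw [hι a haa, intervalIntegral.integral_same]; ring
  have hac : a - c = ε := by rw [ha]; ring
  have hZa' : Zf a = Zf c + (μ - σ ^ 2 / 2) * ε + σ * (w a - w c) := by
    rw [hZ a haa, hι0, hac, div_self hεne, Real.one_rpow]; ring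
  have hιt := hι t hta
  rw [hga, one_mul] at hιt
  have hfgt : ((t - c) / ε) ^ (β / 2) * ((t - c) / ε) ^ (-(β / 2)) = 1 := by
    rw [← Real.rpow_add (div_pos (by linarith) hε)]
    simp
  rw [hcongr, hFTC, hZ t hta, hιt, hZa', hac, div_self hεne, Real.one_rpow,
    intervalIntegral.integral_same, hg t]
  linear_combination (ν * w t) * hfgt

/-- On `[jΔ+ε, (j+1)Δ)`, the explicit process
`Z_t = Z_{jΔ} + (μ - σ̄²/2)(t - jΔ)
       + ((t - jΔ)/ε)^{β/2} [σ̄(W_{jΔ+ε} - W_{jΔ}) + ν ∫_{jΔ+ε}^t ((u - jΔ)/ε)^{-β/2} dW_u]`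
is a strong solution of the linear SDE
`dZ_t = [(μ - σ̄²/2) + (β/(2(t - jΔ)))(Z_t - Z_{jΔ} - (μ - σ̄²/2)(t - jΔ))] dt + ν dW_t`,
stated in integrated form. The stochastic integral `ι` of the deterministic `C¹`
integrand `g(u) = ((u - jΔ)/ε)^{-β/2}` is defined pathwise by integration by parts. -/
theorem explicit_solution_linear_sde {Ω : Type*}
    (W : ℝ → Ω → ℝ) (hW : ∀ ω, Continuous fun t => W t ω)
    (j : ℕ) (Δ ε ν σ μ β : ℝ)
    (hε : 0 < ε) (hεΔ : ε < Δ) (hν : 0 < ν) (hσ : 0 < σ)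
    (hβ : β = 1 - ν ^ 2 / σ ^ 2) (hβ1 : β < 1)
    (g : ℝ → ℝ) (hg : ∀ u, g u = ((u - (j : ℝ) * Δ) / ε) ^ (-(β / 2)))
    (ι : ℝ → Ω → ℝ)
    (hι : ∀ ω, ∀ t ∈ Set.Ico ((j : ℝ) * Δ + ε) (((j : ℝ) + 1) * Δ),
      ι t ω = g t * W t ω - g ((j : ℝ) * Δ + ε) * W ((j : ℝ) * Δ + ε) ω
        - ∫ u in ((j : ℝ) * Δ + ε)..t, deriv g u * W u ω)
    (Z : ℝ → Ω → ℝ)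
    (hZ : ∀ ω, ∀ t ∈ Set.Ico ((j : ℝ) * Δ + ε) (((j : ℝ) + 1) * Δ),
      Z t ω = Z ((j : ℝ) * Δ) ω + (μ - σ ^ 2 / 2) * (t - (j : ℝ) * Δ)
        + ((t - (j : ℝ) * Δ) / ε) ^ (β / 2) *
            (σ * (W ((j : ℝ) * Δ + ε) ω - W ((j : ℝ) * Δ) ω) + ν * ι t ω)) :
    ∀ ω, ∀ t ∈ Set.Ico ((j : ℝ) * Δ + ε) (((j : ℝ) + 1) * Δ),
      Z t ω = Z ((j : ℝ) * Δ + ε) ω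
        + (∫ u in ((j : ℝ) * Δ + ε)..t,
            ((μ - σ ^ 2 / 2)
              + (β / (2 * (u - (j : ℝ) * Δ)))
                * (Z u ω - Z ((j : ℝ) * Δ) ω - (μ - σ ^ 2 / 2) * (u - (j : ℝ) * Δ))))
        + ν * (W t ω - W ((j : ℝ) * Δ + ε) ω) := by
  intro ω t ht
  exact sde_aux ((j : ℝ) * Δ) ε ν σ μ β (((j : ℝ) + 1) * Δ) t hε (fun s => W s ω) (hW ω)
    ht.1 ht.2 g hg (fun s => ι s ω) (fun s => Z s ω)
    (fun s hs => hι ω s hs) (fun s hs => hZ ω s hs)
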